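/- arXiv:1601.05006 — 2 statements merged into one kernel-verified Lean document; each statement's English description precedes it below -/
import Mathlib

section
/- Let n be even, v_j = Σ_{m≤j} a_m x_m, and F_k := v_{2k} (x_{2k+2} x_{2k+4} ⋯ x_n)/(x_{2k+1} x_{2k+3} ⋯ x_{n−1}) for k = 1,...,n/2. Then {F_k, F_l} = 0 for all k, l; in particular each F_k Poisson-commutes with the Hamiltonian H = F_{n/2} = Σ a_i x_i. -/
open Finset Real

/-- partial derivative of `f` in the `i`-th coordinate direction -/
noncomputable def pd {n : ℕ} (i : Fin n) (f : (Fin n → ℝ) → ℝ) (x : Fin n → ℝ) : ℝ :=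
  fderiv ℝ f x (Pi.single i 1)

/-- the quadratic Poisson bracket `{x_i,x_j} = x_i x_j` for `i < j` -/
noncomputable def pb {n : ℕ} (f g : (Fin n → ℝ) → ℝ) (x : Fin n → ℝ) : ℝ :=
  ∑ i : Fin n, ∑ j : Fin n,
    if i < j then x i * x j * (pd i f x * pd j g x - pd j f x * pd i g x) else 0

/-- `v a j x = a_1 x_1 + ⋯ + a_j x_j` (sum of the first `j` terms, 1-based). -/
noncomputable def v {n : ℕ} (a : Fin n → ℝ) (j : ℕ) (x : Fin n → ℝ) : ℝ :=
  ∑ k : Fin n, if (k : ℕ) < j then a k * x k else 0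

/-- right-hand side of the generalized Lotka–Volterra system -/
noncomputable def rhs {n : ℕ} (a : Fin n → ℝ) (x : Fin n → ℝ) (i : Fin n) : ℝ :=
  x i * ((∑ j : Fin n, if i < j then a j * x j else 0)
        - ∑ j : Fin n, if j < i then a j * x j else 0)

/-- `J k = (x_1 x_3 ⋯ x_{2k-1})/(x_2 x_4 ⋯ x_{2k})` (1-based indexing). -/
noncomputable def J {n : ℕ} (k : ℕ) (x : Fin n → ℝ) : ℝ :=
  ∏ m : Fin n, if (m : ℕ) < 2 * k then
    (if (m : ℕ) % 2 = 0 then x m else (x m)⁻¹) else 1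

/-- `I k = (x_{2k+2} x_{2k+4} ⋯ x_n)/(x_{2k+1} x_{2k+3} ⋯ x_{n-1})` (1-based, n even). -/
noncomputable def Ifun {n : ℕ} (k : ℕ) (x : Fin n → ℝ) : ℝ :=
  ∏ m : Fin n, if 2 * k ≤ (m : ℕ) then
    (if (m : ℕ) % 2 = 1 then x m else (x m)⁻¹) else 1

noncomputable def eps (m : ℕ) : ℝ := if m % 2 = 1 then 1 else -1

section deriv
variable {n : ℕ}

lemma hasFDerivAt_v (a : Fin n → ℝ) (j : ℕ) (x : Fin n → ℝ) :
    HasFDerivAt (v a j)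
      (∑ m : Fin n, (if (m : ℕ) < j then a m else 0) • (ContinuousLinearMap.proj m :
        (Fin n → ℝ) →L[ℝ] ℝ)) x := by
  have : (v a j : (Fin n → ℝ) → ℝ) =
      fun y => ∑ m : Fin n, (if (m : ℕ) < j then a m else 0) * y m := by
    funext y
    unfold v
    refine Finset.sum_congr rfl fun m _ => ?_
    split <;> simp
  rw [this]
  apply HasFDerivAt.fun_sum
  intro m _
  simpa using ((ContinuousLinearMap.proj m : (Fin n → ℝ) →L[ℝ] ℝ).hasFDerivAt (x := x)).const_mul
    (if (m : ℕ) < j then a m else 0)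

lemma pd_v (a : Fin n → ℝ) (j : ℕ) (x : Fin n → ℝ) (i : Fin n) :
    pd i (v a j) x = if (i : ℕ) < j then a i else 0 := by
  unfold pd
  rw [(hasFDerivAt_v a j x).fderiv]
  rw [ContinuousLinearMap.sum_apply]
  have : ∀ m : Fin n, ((if (m : ℕ) < j then a m else 0) • (ContinuousLinearMap.proj m :
      (Fin n → ℝ) →L[ℝ] ℝ)) (Pi.single i 1) =
      (if (m : ℕ) < j then a m else 0) * (if m = i then 1 else 0) := by
    intro m
    split <;> simp [Pi.single_apply, eq_comm]
  rw [Finset.sum_congr rfl fun m _ => this m]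
  simp


end deriv

noncomputable def Ig {n : ℕ} (k : ℕ) (m : Fin n) : (Fin n → ℝ) → ℝ := fun y =>
  if 2 * k ≤ (m : ℕ) then (if (m : ℕ) % 2 = 1 then y m else (y m)⁻¹) else 1

noncomputable def Icf {n : ℕ} (k : ℕ) (x : Fin n → ℝ) (m : Fin n) : ℝ :=
  if 2 * k ≤ (m : ℕ) then (if (m : ℕ) % 2 = 1 then (1 : ℝ) else -((x m) ^ 2)⁻¹) else 0

lemma hasFDerivAt_Ifun {n : ℕ} (k : ℕ) (x : Fin n → ℝ) (hx : ∀ i, x i ≠ 0) :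
    HasFDerivAt (Ifun k)
      (∑ m : Fin n, (∏ j ∈ univ.erase m, Ig k j x) • (Icf k x m • (ContinuousLinearMap.proj m :
        (Fin n → ℝ) →L[ℝ] ℝ))) x := by
  classical
  have hder : ∀ m ∈ (univ : Finset (Fin n)), HasFDerivAt (Ig k m)
      (Icf k x m • (ContinuousLinearMap.proj m : (Fin n → ℝ) →L[ℝ] ℝ)) x := by
    intro m _
    by_cases h1 : 2 * k ≤ (m : ℕ)
    · by_cases h2 : (m : ℕ) % 2 = 1
      · have : Ig k m = fun y : Fin n → ℝ => y m := by funext y; simp [Ig, h1, h2]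
        rw [this]
        simp only [Icf, h1, h2, if_true, one_smul]
        exact (ContinuousLinearMap.proj m : (Fin n → ℝ) →L[ℝ] ℝ).hasFDerivAt (x := x)
      · have : Ig k m = Inv.inv ∘ (fun y : Fin n → ℝ => y m) := by funext y; simp [Ig, h1, h2]
        rw [this]
        have h4 := (hasDerivAt_inv (x := x m) (hx m)).comp_hasFDerivAt x
          ((ContinuousLinearMap.proj m : (Fin n → ℝ) →L[ℝ] ℝ).hasFDerivAt (x := x))
        simp only [Icf, h1, h2, if_true, if_false]
        exact h4
    · have : Ig k m = fun _ => 1 := by funext y; simp [Ig, h1]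
      rw [this]
      simpa [Icf, h1] using hasFDerivAt_const (1 : ℝ) x
  have hprod := HasFDerivAt.finset_prod (u := (univ : Finset (Fin n))) hder
  have hIfun : (Ifun k : (Fin n → ℝ) → ℝ) = (fun y => ∏ m ∈ univ, Ig k m y) := by
    funext y; rfl
  rw [hIfun]
  exact hprod

lemma pd_Ifun {n : ℕ} (k : ℕ) (x : Fin n → ℝ) (hx : ∀ i, x i ≠ 0) (i : Fin n) :
    pd i (Ifun k) x = (if 2 * k ≤ (i : ℕ) then eps i else 0) * Ifun k x / x i := by
  classical
  unfold pd
  rw [(hasFDerivAt_Ifun k x hx).fderiv, ContinuousLinearMap.sum_apply]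
  have hev : ∀ m : Fin n, ((∏ j ∈ univ.erase m, Ig k j x) • (Icf k x m •
      (ContinuousLinearMap.proj m : (Fin n → ℝ) →L[ℝ] ℝ))) (Pi.single i 1) =
      if m = i then (∏ j ∈ univ.erase m, Ig k j x) * Icf k x m else 0 := by
    intro m
    by_cases h : m = i <;> simp [h, Pi.single_apply, mul_comm]
  rw [Finset.sum_congr rfl fun m _ => hev m, Finset.sum_ite_eq' univ i _]
  simp only [mem_univ, if_true]
  have hsplit : Ifun k x = Ig k i x * ∏ j ∈ univ.erase i, Ig k j x :=
    (Finset.mul_prod_erase univ (fun j => Ig k j x) (mem_univ i)).symm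
  by_cases h1 : 2 * k ≤ (i : ℕ)
  · by_cases h2 : (i : ℕ) % 2 = 1
    · rw [hsplit]
      simp only [Icf, Ig, h1, h2, if_true, eps]
      field_simp [hx i]
    · rw [hsplit]
      simp only [Icf, Ig, h1, h2, if_true, if_false, eps]
      field_simp [hx i]
      try ring
      try exact Or.inl trivial
  · simp [Icf, h1]

lemma pd_F {n : ℕ} (a : Fin n → ℝ) (k : ℕ) (x : Fin n → ℝ) (hx : ∀ i, x i ≠ 0) (i : Fin n) :
    pd i (fun y => v a (2 * k) y * Ifun k y) x =
      (if (i : ℕ) < 2 * k then a i else 0) * Ifun k x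
        + v a (2 * k) x * ((if 2 * k ≤ (i : ℕ) then eps i else 0) * Ifun k x / x i) := by
  have hv := hasFDerivAt_v a (2 * k) x
  have hI := hasFDerivAt_Ifun k x hx
  have hmul := hv.mul hI
  unfold pd
  rw [show (fun y => v a (2 * k) y * Ifun k y) = v a (2 * k) * Ifun k from rfl, hmul.fderiv]
  rw [ContinuousLinearMap.add_apply, ContinuousLinearMap.smul_apply,
    ContinuousLinearMap.smul_apply]
  have hv' := pd_v a (2 * k) x i
  have hI' := pd_Ifun k x hx i
  unfold pd at hv' hI'
  rw [hv.fderiv] at hv'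
  rw [(hasFDerivAt_Ifun k x hx).fderiv] at hI'
  rw [hv', hI']
  simp only [smul_eq_mul]
  ring


section comb

variable (K : ℕ) (g : ℕ → ℝ)

/-- prefix of the truncated sequence -/
lemma prefix_g (j : ℕ) :
    ∑ i ∈ range j, (if i < K then g i else 0) = ∑ i ∈ range (min j K), g i := by
  rw [← Finset.sum_filter]
  congr 1
  ext i
  simp only [Finset.mem_filter, Finset.mem_range, Nat.lt_min]

lemma prefix_eps (hK : K % 2 = 0) (j : ℕ) :
    ∑ i ∈ range j, (if K ≤ i then eps i else 0) =
      if K < j ∧ j % 2 = 1 then -1 else 0 := by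
  induction j with
  | zero => simp
  | succ j ih =>
    rw [Finset.sum_range_succ, ih]
    by_cases h1 : K ≤ j
    · by_cases h2 : j % 2 = 1
      · have hKj : K < j := by omega
        have h3 : ¬ (K < j + 1 ∧ (j + 1) % 2 = 1) := by omega
        simp [eps, h1, h2, hKj, h3]
        omega
      · have h3 : K < j + 1 ∧ (j + 1) % 2 = 1 := by omega
        have h4 : ¬ (K < j ∧ j % 2 = 1) := by omega
        simp [eps, h1, h2, h3, h4]
    · have h3 : ¬ (K < j ∧ j % 2 = 1) := by omega
      have h4 : ¬ (K < j + 1 ∧ (j + 1) % 2 = 1) := by omega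
      simp [h1, h3, h4]

/-- the paired telescoping sum -/
lemma pair_sum (hK : K % 2 = 0) (c : ℕ) :
    ∑ j ∈ range (2 * c), (g (K + j) * (1 + (if (K + j) % 2 = 1 then (-1 : ℝ) else 0))
      - eps (K + j) * ∑ i ∈ range (K + j), g i) = 0 := by
  induction c with
  | zero => simp
  | succ c ih =>
    have h1 : 2 * (c + 1) = (2 * c + 1) + 1 := by ring
    rw [h1, Finset.sum_range_succ, Finset.sum_range_succ, ih]
    have he : (K + 2 * c) % 2 = 0 := by omega
    have ho : (K + (2 * c + 1)) % 2 = 1 := by omega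
    have hsucc : K + (2 * c + 1) = (K + 2 * c) + 1 := by ring
    rw [hsucc] at ho ⊢
    rw [Finset.sum_range_succ (f := g) (n := K + 2 * c)]
    simp only [eps, he, ho, if_true, if_false]
    norm_num
    try ring

end comb

/-- The main combinatorial identity. -/
lemma comb_main (n K L : ℕ) (hK : K % 2 = 0) (hL : L % 2 = 0) (hn : n % 2 = 0)
    (hKL : K ≤ L) (hLn : L ≤ n) (g : ℕ → ℝ) :
    (∑ i ∈ range n, ∑ j ∈ range n, if i < j then
        (((if i < K then g i else 0) + (∑ t ∈ range K, g t) * (if K ≤ i then eps i else 0)) *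
         ((if j < L then g j else 0) + (∑ t ∈ range L, g t) * (if L ≤ j then eps j else 0)) -
         ((if j < K then g j else 0) + (∑ t ∈ range K, g t) * (if K ≤ j then eps j else 0)) *
         ((if i < L then g i else 0) + (∑ t ∈ range L, g t) * (if L ≤ i then eps i else 0)))
      else 0) = 0 := by
  set V : ℝ := ∑ t ∈ range K, g t with hV
  set W : ℝ := ∑ t ∈ range L, g t with hW
  set p : ℕ → ℝ := fun i => (if i < K then g i else 0) + V * (if K ≤ i then eps i else 0) with hp
  set q : ℕ → ℝ := fun i => (if i < L then g i else 0) + W * (if L ≤ i then eps i else 0) with hq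
  -- step 1: reduce to single sum over j of q j * P j - p j * Q j
  have step1 : (∑ i ∈ range n, ∑ j ∈ range n, if i < j then (p i * q j - p j * q i) else 0)
      = ∑ j ∈ range n, (q j * (∑ i ∈ range j, p i) - p j * (∑ i ∈ range j, q i)) := by
    have swap : ∀ (u w : ℕ → ℝ),
        (∑ i ∈ range n, ∑ j ∈ range n, if i < j then u i * w j else 0)
        = ∑ j ∈ range n, w j * (∑ i ∈ range j, u i) := by
      intro u w
      rw [Finset.sum_comm]
      refine Finset.sum_congr rfl fun j hj => ?_
      have hjn : j < n := Finset.mem_range.mp hj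
      rw [Finset.mul_sum]
      rw [← Finset.sum_filter]
      have : (range n).filter (fun i => i < j) = range j := by
        ext i
        simp only [Finset.mem_filter, Finset.mem_range]
        omega
      rw [this]
      exact Finset.sum_congr rfl fun i _ => mul_comm _ _
    have expand : (∑ i ∈ range n, ∑ j ∈ range n, if i < j then (p i * q j - p j * q i) else 0)
        = (∑ i ∈ range n, ∑ j ∈ range n, if i < j then p i * q j else 0)
          - (∑ i ∈ range n, ∑ j ∈ range n, if i < j then q i * p j else 0) := by
      rw [← Finset.sum_sub_distrib]
      refine Finset.sum_congr rfl fun i _ => ?_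
      rw [← Finset.sum_sub_distrib]
      refine Finset.sum_congr rfl fun j _ => ?_
      split <;> ring
    rw [expand, swap p q, swap q p, ← Finset.sum_sub_distrib]
  rw [step1]
  -- step 2: evaluate the summand
  have hPj : ∀ j, (∑ i ∈ range j, p i) = (∑ i ∈ range (min j K), g i)
      + V * (if K < j ∧ j % 2 = 1 then -1 else 0) := by
    intro j
    rw [hp]
    rw [Finset.sum_add_distrib, prefix_g, ← Finset.mul_sum, prefix_eps K hK]
  have hQj : ∀ j, (∑ i ∈ range j, q i) = (∑ i ∈ range (min j L), g i)
      + W * (if L < j ∧ j % 2 = 1 then -1 else 0) := by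
    intro j
    rw [hq]
    rw [Finset.sum_add_distrib, prefix_g, ← Finset.mul_sum, prefix_eps L hL]
  have step2 : ∀ j < n, (q j * (∑ i ∈ range j, p i) - p j * (∑ i ∈ range j, q i))
      = if K ≤ j ∧ j < L then
          V * (g j * (1 + (if j % 2 = 1 then (-1 : ℝ) else 0))
            - eps j * ∑ i ∈ range j, g i) else 0 := by
    intro j hj
    rw [hPj, hQj, hp, hq]
    by_cases c1 : j < K
    · have c2 : j < L := by omega
      have c3 : ¬ K ≤ j := by omega
      have c4 : ¬ L ≤ j := by omega
      have c5 : ¬ (K < j ∧ j % 2 = 1) := by omega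
      have c6 : ¬ (L < j ∧ j % 2 = 1) := by omega
      have c7 : min j K = j := by omega
      have c8 : min j L = j := by omega
      simp only [c1, c2, c3, c4, c5, c6, c7, c8, if_true, if_false,
        show ¬ (K ≤ j ∧ j < L) from by omega]
      simp
      try ring
    · by_cases c2 : j < L
      · -- middle region
        have c3 : K ≤ j := by omega
        have c4 : ¬ L ≤ j := by omega
        have c6 : ¬ (L < j ∧ j % 2 = 1) := by omega
        have c7 : min j K = K := by omega
        have c8 : min j L = j := by omega
        have c9 : (K < j ∧ j % 2 = 1) ↔ (j % 2 = 1) := by omega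
        simp only [c1, c2, c3, c4, c6, c7, c8, if_true, if_false, c9,
          show (K ≤ j ∧ j < L) from ⟨c3, c2⟩, ← hV]
        by_cases c10 : j % 2 = 1
        · simp only [c10, if_true, eps]
          simp
          try ring
        · simp only [c10, if_false, eps]
          simp
          try ring
      · -- top region
        have c3 : K ≤ j := by omega
        have c4 : L ≤ j := by omega
        have c7 : min j K = K := by omega
        have c8 : min j L = L := by omega
        have c9 : (K < j ∧ j % 2 = 1) ↔ (j % 2 = 1) := by omega
        have c10 : (L < j ∧ j % 2 = 1) ↔ (j % 2 = 1) := by omega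
        simp only [c1, c2, c3, c4, c7, c8, c9, c10, if_true, if_false, ← hV, ← hW,
          show ¬ (K ≤ j ∧ j < L) from by omega]
        by_cases c11 : j % 2 = 1
        · simp only [c11, if_true]; simp
        · simp only [c11, if_false]; simp; ring
  rw [Finset.sum_congr rfl fun j hj => step2 j (Finset.mem_range.mp hj)]
  -- step 3: the remaining sum telescopes in pairs
  rw [← Finset.sum_filter]
  have hfil : (range n).filter (fun j => K ≤ j ∧ j < L) = Finset.Ico K L := by
    ext j
    simp [Finset.mem_Ico]
    omega
  rw [hfil, ← Finset.mul_sum]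
  have : ∑ j ∈ Finset.Ico K L, (g j * (1 + (if j % 2 = 1 then (-1 : ℝ) else 0))
      - eps j * ∑ i ∈ range j, g i) = 0 := by
    rw [Finset.sum_Ico_eq_sum_range]
    have hc : L - K = 2 * ((L - K) / 2) := by omega
    rw [hc]
    exact pair_sum K g hK ((L - K) / 2)
  rw [this, mul_zero]


lemma pb_antisymm {n : ℕ} (f g : (Fin n → ℝ) → ℝ) (x : Fin n → ℝ) :
    pb f g x = - pb g f x := by
  have h : pb f g x + pb g f x = 0 := by
    unfold pb
    rw [← Finset.sum_add_distrib]
    refine Finset.sum_eq_zero fun i _ => ?_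
    rw [← Finset.sum_add_distrib]
    refine Finset.sum_eq_zero fun j _ => ?_
    split_ifs
    · ring
    · ring
  linarith

lemma half_case (n : ℕ) (hn : Even n) (a : Fin n → ℝ) (x : Fin n → ℝ)
    (hx : ∀ i, x i ≠ 0) (k l : ℕ) (hkl : k ≤ l) (hl : l ≤ n / 2) :
    pb (fun y => v a (2 * k) y * Ifun k y) (fun y => v a (2 * l) y * Ifun l y) x = 0 := by
  classical
  have hn2 : n % 2 = 0 := Nat.even_iff.mp hn
  have h2l : 2 * l ≤ n := by omega
  have h2k : 2 * k ≤ n := by omega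
  set g : ℕ → ℝ := fun i => if h : i < n then a ⟨i, h⟩ * x ⟨i, h⟩ else 0 with hgdef
  have hg : ∀ i : Fin n, g (i : ℕ) = a i * x i := by
    intro i
    simp [hgdef, i.isLt]
  have hV : ∀ K : ℕ, K ≤ n → v a K x = ∑ t ∈ range K, g t := by
    intro K hK
    unfold v
    have h1 : ∀ m : Fin n, (if (m : ℕ) < K then a m * x m else 0)
        = (fun i => if i < K then g i else 0) (m : ℕ) := by
      intro m
      simp only [hg m]
    rw [Finset.sum_congr rfl fun m _ => h1 m,
      Fin.sum_univ_eq_sum_range (fun i => if i < K then g i else 0) n,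
      prefix_g K g n]
    rw [min_eq_right hK]
  set P : ℕ → ℝ := fun i => (if i < 2 * k then g i else 0)
    + (∑ t ∈ range (2 * k), g t) * (if 2 * k ≤ i then eps i else 0) with hP
  set Q : ℕ → ℝ := fun i => (if i < 2 * l then g i else 0)
    + (∑ t ∈ range (2 * l), g t) * (if 2 * l ≤ i then eps i else 0) with hQ
  have key : ∀ i j : Fin n,
      x i * x j * (pd i (fun y => v a (2 * k) y * Ifun k y) x *
          pd j (fun y => v a (2 * l) y * Ifun l y) x -
        pd j (fun y => v a (2 * k) y * Ifun k y) x *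
          pd i (fun y => v a (2 * l) y * Ifun l y) x)
      = Ifun k x * Ifun l x * (P (i : ℕ) * Q (j : ℕ) - P (j : ℕ) * Q (i : ℕ)) := by
    intro i j
    have e1 : ∀ (c : Prop) [Decidable c] (u w : ℝ),
        (if c then u * w else 0) = (if c then u else 0) * w := by
      intro c _ u w
      split <;> simp
    rw [pd_F a k x hx i, pd_F a k x hx j, pd_F a l x hx i, pd_F a l x hx j]
    rw [hP, hQ]
    simp only [hg i, hg j, hV (2 * k) h2k, hV (2 * l) h2l]
    rw [e1 ((i : ℕ) < 2 * k) (a i) (x i), e1 ((j : ℕ) < 2 * k) (a j) (x j),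
      e1 ((i : ℕ) < 2 * l) (a i) (x i), e1 ((j : ℕ) < 2 * l) (a j) (x j)]
    generalize (∑ t ∈ range (2 * k), g t) = V
    generalize (∑ t ∈ range (2 * l), g t) = W
    generalize ((if (i : ℕ) < 2 * k then a i else 0 : ℝ)) = Ai
    generalize ((if (j : ℕ) < 2 * k then a j else 0 : ℝ)) = Aj
    generalize ((if (i : ℕ) < 2 * l then a i else 0 : ℝ)) = Bi
    generalize ((if (j : ℕ) < 2 * l then a j else 0 : ℝ)) = Bj
    generalize ((if 2 * k ≤ (i : ℕ) then eps (i : ℕ) else 0 : ℝ)) = ci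
    generalize ((if 2 * k ≤ (j : ℕ) then eps (j : ℕ) else 0 : ℝ)) = cj
    generalize ((if 2 * l ≤ (i : ℕ) then eps (i : ℕ) else 0 : ℝ)) = di
    generalize ((if 2 * l ≤ (j : ℕ) then eps (j : ℕ) else 0 : ℝ)) = dj
    field_simp [hx i, hx j]
  have rewrite1 : pb (fun y => v a (2 * k) y * Ifun k y)
      (fun y => v a (2 * l) y * Ifun l y) x
      = ∑ i : Fin n, ∑ j : Fin n, if i < j then
          Ifun k x * Ifun l x * (P (i : ℕ) * Q (j : ℕ) - P (j : ℕ) * Q (i : ℕ)) else 0 := by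
    unfold pb
    refine Finset.sum_congr rfl fun i _ => Finset.sum_congr rfl fun j _ => ?_
    split_ifs with h
    · exact key i j
    · rfl
  rw [rewrite1]
  have pull : ∀ (C : ℝ) (F : Fin n → Fin n → ℝ),
      (∑ i : Fin n, ∑ j : Fin n, if i < j then C * F i j else 0)
        = C * ∑ i : Fin n, ∑ j : Fin n, if i < j then F i j else 0 := by
    intro C F
    rw [Finset.mul_sum]
    refine Finset.sum_congr rfl fun i _ => ?_
    rw [Finset.mul_sum]
    refine Finset.sum_congr rfl fun j _ => ?_
    split_ifs <;> simp
  rw [pull]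
  have hsum : (∑ i : Fin n, ∑ j : Fin n,
        if i < j then (P (i : ℕ) * Q (j : ℕ) - P (j : ℕ) * Q (i : ℕ)) else 0)
      = ∑ i ∈ range n, ∑ j ∈ range n, if i < j then (P i * Q j - P j * Q i) else 0 := by
    rw [← Fin.sum_univ_eq_sum_range
      (fun i => ∑ j ∈ range n, if i < j then (P i * Q j - P j * Q i) else 0) n]
    refine Finset.sum_congr rfl fun i _ => ?_
    rw [← Fin.sum_univ_eq_sum_range
      (fun j => if (i : ℕ) < j then (P (i : ℕ) * Q j - P j * Q (i : ℕ)) else 0) n]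
    refine Finset.sum_congr rfl fun j _ => ?_
    simp only [Fin.lt_def]
  rw [hsum, hP, hQ]
  rw [comb_main n (2 * k) (2 * l) (by omega) (by omega) hn2 (by omega) h2l g]
  rw [mul_zero]

/-- for `n` even, the functions `F_k = v_{2k} I_k` pairwise
Poisson-commute, and `F_{n/2} = H = Σ a_i x_i`. -/
theorem F_involutive (n : ℕ) (hn : Even n) (a : Fin n → ℝ)
    (x : Fin n → ℝ) (hx : ∀ i, x i ≠ 0) :
    (∀ k l : ℕ, 1 ≤ k → k ≤ n / 2 → 1 ≤ l → l ≤ n / 2 →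
      pb (fun y => v a (2 * k) y * Ifun k y) (fun y => v a (2 * l) y * Ifun l y) x = 0) ∧
    v a (2 * (n / 2)) x * Ifun (n / 2) x = ∑ i, a i * x i := by
  have hn2 : n % 2 = 0 := Nat.even_iff.mp hn
  constructor
  · intro k l _ hk _ hl
    rcases le_total k l with h | h
    · exact half_case n hn a x hx k l h hl
    · rw [pb_antisymm, half_case n hn a x hx l k h hk, neg_zero]
  · have hI : Ifun (n / 2) x = 1 := by
      unfold Ifun
      refine Finset.prod_eq_one fun m _ => ?_
      rw [if_neg]
      have := m.isLt
      omega
    have hv : v a (2 * (n / 2)) x = ∑ i, a i * x i := by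
      unfold v
      refine Finset.sum_congr rfl fun m _ => ?_
      rw [if_pos]
      have := m.isLt
      omega
    rw [hI, hv, mul_one]
end

section
/- Let x⁰ ∈ R^n with h₀ := Σ a_i x_i⁰ ≠ 0, and set v_i⁰ := Σ_{k≤i} a_k x_k⁰. Then x_i(t) = x_i⁰ e^{t h₀} h₀² / [(h₀ + (e^{t h₀}−1) v_{i−1}⁰)(h₀ + (e^{t h₀}−1) v_i⁰)] solves the generalized Lotka-Volterra system ẋ_i = x_i(Σ_{j>i} a_j x_j − Σ_{j<i} a_j x_j) with x(0) = x⁰, on any interval containing 0 where the denominators are nonzero. -/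
open Finset Real

/-- explicit solution of the generalized Lotka–Volterra system when `h₀ ≠ 0` -/
noncomputable def sol {n : ℕ} (a : Fin n → ℝ) (x0 : Fin n → ℝ) (t : ℝ) (i : Fin n) : ℝ :=
  x0 i * Real.exp (t * (∑ m, a m * x0 m)) * (∑ m, a m * x0 m) ^ 2 /
    (((∑ m, a m * x0 m) + (Real.exp (t * (∑ m, a m * x0 m)) - 1) * v a (i : ℕ) x0)
      * ((∑ m, a m * x0 m) + (Real.exp (t * (∑ m, a m * x0 m)) - 1) * v a ((i : ℕ) + 1) x0))

section helperGLV
variable {n : ℕ} (a x0 : Fin n → ℝ)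

lemma v_zero' : v a 0 x0 = 0 := by simp [v]

lemma v_all' : v a n x0 = ∑ m, a m * x0 m := by
  unfold v
  exact Finset.sum_congr rfl fun k _ => if_pos k.isLt

lemma sum_if_succ' (f : Fin n → ℝ) (j : ℕ) (hj : j < n) :
    (∑ k : Fin n, if (k:ℕ) < j + 1 then f k else 0)
      = (∑ k : Fin n, if (k:ℕ) < j then f k else 0) + f ⟨j, hj⟩ := by
  have hk : ∀ k : Fin n, (if (k:ℕ) < j + 1 then f k else 0)
      = (if (k:ℕ) < j then f k else 0) + (if k = ⟨j, hj⟩ then f k else 0) := by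
    intro k
    by_cases h2 : k = ⟨j, hj⟩
    · subst h2; simp
    · have hne : (k:ℕ) ≠ j := fun hkj => h2 (Fin.ext hkj)
      rw [if_neg h2]
      by_cases h1 : (k:ℕ) < j
      · rw [if_pos (by omega), if_pos h1]; ring
      · rw [if_neg (by omega), if_neg h1]; ring
  rw [Finset.sum_congr rfl fun k _ => hk k, Finset.sum_add_distrib,
    Finset.sum_ite_eq' Finset.univ ⟨j, hj⟩ f]
  simp

lemma v_succ' (j : ℕ) (hj : j < n) :
    v a (j+1) x0 = v a j x0 + a ⟨j,hj⟩ * x0 ⟨j,hj⟩ :=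
  sum_if_succ' (fun k => a k * x0 k) j hj

end helperGLV

/-- the explicit formula solves the generalized Lotka–Volterra
system with initial condition `x⁰`, whenever `h₀ ≠ 0`, at every time where the
denominators are nonzero. -/
theorem explicit_solution_nonzero_h0 (n : ℕ) (a : Fin n → ℝ) (x0 : Fin n → ℝ)
    (hh0 : (∑ m, a m * x0 m) ≠ 0) :
    (∀ i, sol a x0 0 i = x0 i) ∧
    (∀ t : ℝ,
      (∀ j : ℕ, j ≤ n →
        (∑ m, a m * x0 m) + (Real.exp (t * (∑ m, a m * x0 m)) - 1) * v a j x0 ≠ 0) →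
      ∀ i : Fin n, HasDerivAt (fun s => sol a x0 s i) (rhs a (sol a x0 t) i) t) := by
  constructor
  · intro i
    simp only [sol, zero_mul, Real.exp_zero, sub_self, add_zero, mul_one]
    rw [pow_two, mul_div_assoc, div_self (mul_ne_zero hh0 hh0), mul_one]
  · intro t hden
    set H := ∑ m, a m * x0 m with hH
    set E := Real.exp (t * H) with hE
    have hEne : E ≠ 0 := by rw [hE]; exact Real.exp_ne_zero _
    -- key identity: partial sums of the solution
    have key : ∀ j, j ≤ n → (∑ k : Fin n, if (k:ℕ) < j then a k * sol a x0 t k else 0)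
        = E * H * v a j x0 / (H + (E - 1) * v a j x0) := by
      intro j
      induction j with
      | zero => intro _; simp [v_zero']
      | succ j ih =>
        intro hj
        have hjn : j < n := hj
        rw [sum_if_succ' (fun k => a k * sol a x0 t k) j hjn, ih (Nat.le_of_lt hjn)]
        have hsol : sol a x0 t ⟨j, hjn⟩
            = x0 ⟨j, hjn⟩ * E * H ^ 2 /
              ((H + (E - 1) * v a j x0) * (H + (E - 1) * v a (j+1) x0)) := rfl
        have hP : H + (E - 1) * v a j x0 ≠ 0 := hden j (Nat.le_of_lt hjn)
        have hQ : H + (E - 1) * (v a j x0 + a ⟨j,hjn⟩ * x0 ⟨j,hjn⟩) ≠ 0 := by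
          rw [← v_succ' a x0 j hjn]; exact hden (j+1) hj
        rw [hsol, v_succ' a x0 j hjn, mul_div_assoc', div_add_div _ _ hP (mul_ne_zero hP hQ),
          div_eq_div_iff (mul_ne_zero hP (mul_ne_zero hP hQ)) hQ]
        ring
    -- full sum
    have hfull : (∑ k : Fin n, a k * sol a x0 t k) = H := by
      have h1 := key n le_rfl
      rw [show (∑ k : Fin n, if (k:ℕ) < n then a k * sol a x0 t k else 0)
          = ∑ k : Fin n, a k * sol a x0 t k from
          Finset.sum_congr rfl fun k _ => if_pos k.isLt, v_all' a x0, ← hH] at h1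
      rw [h1, show H + (E - 1) * H = E * H by ring]
      field_simp
    intro i
    have hP : H + (E - 1) * v a (i:ℕ) x0 ≠ 0 := hden (i:ℕ) (Nat.le_of_lt i.isLt)
    have hQ : H + (E - 1) * v a ((i:ℕ)+1) x0 ≠ 0 := hden ((i:ℕ)+1) i.isLt
    -- rewrite the rhs
    have hrhs : rhs a (sol a x0 t) i
        = sol a x0 t i *
            ((H - E * H * v a ((i:ℕ)+1) x0 / (H + (E - 1) * v a ((i:ℕ)+1) x0))
              - E * H * v a (i:ℕ) x0 / (H + (E - 1) * v a (i:ℕ) x0)) := by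
      unfold rhs
      congr 1
      have hgt : (∑ j : Fin n, if i < j then a j * sol a x0 t j else 0)
          = (∑ j : Fin n, a j * sol a x0 t j)
            - ∑ j : Fin n, (if (j:ℕ) < (i:ℕ)+1 then a j * sol a x0 t j else 0) := by
        rw [← Finset.sum_sub_distrib]
        refine Finset.sum_congr rfl fun j _ => ?_
        by_cases hij : i < j
        · rw [if_pos hij, if_neg (by have := Fin.lt_def.mp hij; omega)]; ring
        · rw [if_neg hij,
            if_pos (by have : ¬ (i:ℕ) < (j:ℕ) := fun hc => hij (Fin.lt_def.mpr hc); omega)]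
          ring
      have hlt : (∑ j : Fin n, if j < i then a j * sol a x0 t j else 0)
          = ∑ j : Fin n, (if (j:ℕ) < (i:ℕ) then a j * sol a x0 t j else 0) := rfl
      rw [hgt, hlt, hfull, key ((i:ℕ)+1) i.isLt, key (i:ℕ) (Nat.le_of_lt i.isLt)]
    -- derivative computation
    have hexp : HasDerivAt (fun s : ℝ => Real.exp (s * H)) (E * H) t := by
      have := ((hasDerivAt_id t).mul_const H).exp
      simpa [hE] using this
    have hDp : ∀ p : ℕ, HasDerivAt (fun s => H + (Real.exp (s*H) - 1) * v a p x0)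
        (E * H * v a p x0) t := by
      intro p
      have := ((hexp.sub_const 1).mul_const (v a p x0)).const_add H
      simpa [mul_comm, mul_assoc] using this
    have hnum : HasDerivAt (fun s => x0 i * Real.exp (s*H) * H^2)
        (x0 i * (E * H) * H^2) t := (hexp.const_mul (x0 i)).mul_const (H^2)
    have hden2 := (hDp (i:ℕ)).mul (hDp ((i:ℕ)+1))
    have hdiv := hnum.div hden2 (mul_ne_zero hP hQ)
    have hfun : (fun s => sol a x0 s i)
        = (fun s => x0 i * Real.exp (s*H) * H^2 /
            ((H + (Real.exp (s*H) - 1) * v a (i:ℕ) x0)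
              * (H + (Real.exp (s*H) - 1) * v a ((i:ℕ)+1) x0))) := rfl
    rw [hfun]
    refine hdiv.congr_deriv ?_
    simp only [Pi.mul_apply]
    rw [hrhs]
    have hsoli : sol a x0 t i
        = x0 i * E * H ^ 2 /
          ((H + (E - 1) * v a (i:ℕ) x0) * (H + (E - 1) * v a ((i:ℕ)+1) x0)) := rfl
    rw [hsoli, ← hE]
    field_simp
    ring
end
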